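/- arXiv:2512.21977 — 2 statements merged into one kernel-verified Lean document; each statement's English description precedes it below -/
import Mathlib

section
/- There exists a constant c > 0 such that for every n and every integer j with 1 ≤ j ≤ n^{1/5}, the critical Erdős–Rényi random graph G(n,1/n) satisfies P( |C(1)| = j ) ≥ c j^{−3/2}. -/
open MeasureTheory Filter
open scoped ENNReal

/-- The Erdős–Rényi `G(n, 1/n)` measure on edge configurations of `K_n`:
each potential edge is retained (`true`) independently with probability `1/n`. -/
noncomputable def erMeasure (n : ℕ) : Measure (Sym2 (Fin n) → Bool) :=
  Measure.pi fun _ => (PMF.bernoulli (min (n : ℝ≥0∞)⁻¹ 1).toNNReal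
    ((ENNReal.toNNReal_mono ENNReal.one_ne_top (min_le_right _ _)).trans_eq ENNReal.toNNReal_one)).toMeasure

instance (n : ℕ) : IsProbabilityMeasure (erMeasure n) := by
  unfold erMeasure; infer_instance

/-- The simple graph on `Fin n` determined by an edge configuration. -/
def graphOf {n : ℕ} (ω : Sym2 (Fin n) → Bool) : SimpleGraph (Fin n) where
  Adj u v := u ≠ v ∧ ω s(u, v) = true
  symm := by
    constructor
    intro u v h
    exact ⟨Ne.symm h.1, by rw [Sym2.eq_swap]; exact h.2⟩
  loopless := by
    constructor
    intro u h
    exact h.1 rfl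

/-- Size of the connected component of `v`. -/
noncomputable def compSize {n : ℕ} (G : SimpleGraph (Fin n)) (v : Fin n) : ℕ :=
  Nat.card {w : Fin n | G.Reachable v w}

/-- Diameter of a finite graph: maximal distance between two vertices. -/
noncomputable def gdiam {n : ℕ} (G : SimpleGraph (Fin n)) : ℕ :=
  Finset.univ.sup fun p : Fin n × Fin n => G.dist p.1 p.2

open scoped Classical in
/-- Diameter of the connected component of `x`. -/
noncomputable def compDiam {n : ℕ} (G : SimpleGraph (Fin n)) (x : Fin n) : ℕ :=
  Finset.univ.sup fun p : Fin n × Fin n =>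
    if G.Reachable x p.1 ∧ G.Reachable x p.2 then G.dist p.1 p.2 else 0

/-- Product of the weights of the edges of `T`. -/
noncomputable def treeWeight {n : ℕ} (w : Sym2 (Fin n) → ℝ) (T : SimpleGraph (Fin n)) : ℝ :=
  letI : Fintype T.edgeSet := Fintype.ofFinite _
  ∏ e ∈ T.edgeSet.toFinset, w e

open scoped Classical in
/-- Probability that the `w`-weighted uniform spanning tree of `K_n` lies in `E`. -/
noncomputable def ustProb {n : ℕ} (w : Sym2 (Fin n) → ℝ) (E : Set (SimpleGraph (Fin n))) : ℝ :=
  (∑ T ∈ Finset.univ.filter (fun T : SimpleGraph (Fin n) => T.IsTree ∧ T ∈ E), treeWeight w T) /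
    (∑ T ∈ Finset.univ.filter (fun T : SimpleGraph (Fin n) => T.IsTree), treeWeight w T)

/-- The random weights: heavy edges get weight `n^(1+γ)`, the others weight `1`. -/
noncomputable def weightFn (n : ℕ) (γ : ℝ) (ω : Sym2 (Fin n) → Bool) (e : Sym2 (Fin n)) : ℝ :=
  if ω e then (n : ℝ) ^ ((1 : ℝ) + γ) else 1

namespace CSLB
variable {n : ℕ}

/-- Prüfer-style decoding of a list into an edge set on `S`. -/
def decodeE : List (Fin n) → Finset (Fin n) → Finset (Sym2 (Fin n))
  | [], S =>
    if h : 1 < S.card then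
      {s(S.min' (Finset.card_pos.mp (Nat.lt_trans Nat.zero_lt_one h)),
        S.max' (Finset.card_pos.mp (Nat.lt_trans Nat.zero_lt_one h)))}
    else ∅
  | b :: t, S =>
    if h : (S \ (b :: t).toFinset).Nonempty then
      insert s((S \ (b :: t).toFinset).min' h, b)
        (decodeE t (S.erase ((S \ (b :: t).toFinset).min' h)))
    else ∅

lemma sdiff_nonempty_of_card {t : List (Fin n)} {b : Fin n} {S : Finset (Fin n)}
    (hcard : S.card = (b :: t).length + 2) : (S \ (b :: t).toFinset).Nonempty := by
  have h1 : ((b :: t).toFinset).card ≤ (b :: t).length := (b :: t).toFinset_card_le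
  have h2 := Finset.le_card_sdiff ((b :: t).toFinset) S
  rw [← Finset.card_pos]
  simp only [List.length_cons] at hcard h1
  omega

lemma decodeE_cons {t : List (Fin n)} {b : Fin n} {S : Finset (Fin n)}
    (h : (S \ (b :: t).toFinset).Nonempty) :
    decodeE (b :: t) S = insert s((S \ (b :: t).toFinset).min' h, b)
        (decodeE t (S.erase ((S \ (b :: t).toFinset).min' h))) := by
  rw [decodeE, dif_pos h]

lemma decodeE_nil {S : Finset (Fin n)} (h : 1 < S.card) :
    decodeE [] S = {s(S.min' (Finset.card_pos.mp (Nat.lt_trans Nat.zero_lt_one h)),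
        S.max' (Finset.card_pos.mp (Nat.lt_trans Nat.zero_lt_one h)))} := by
  rw [decodeE, dif_pos h]

/-- Every edge of the decoded edge set has two distinct endpoints in `S`. -/
lemma decodeE_mem {a : List (Fin n)} {S : Finset (Fin n)}
    (hsub : ∀ z ∈ a, z ∈ S) (hcard : S.card = a.length + 2) :
    ∀ e ∈ decodeE a S, ∃ u v : Fin n, u ∈ S ∧ v ∈ S ∧ u ≠ v ∧ e = s(u, v) := by
  induction a generalizing S with
  | nil =>
    intro e he
    have h2 : 1 < S.card := by simp at hcard; omega
    rw [decodeE_nil h2] at he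
    simp only [Finset.mem_singleton] at he
    refine ⟨_, _, S.min'_mem _, S.max'_mem _, ?_, he⟩
    exact ne_of_lt (S.min'_lt_max'_of_card (by omega))
  | cons b t ih =>
    intro e he
    have hne := sdiff_nonempty_of_card hcard
    rw [decodeE_cons hne] at he
    set v := (S \ (b :: t).toFinset).min' hne with hv
    have hvS : v ∈ S ∧ v ∉ (b :: t).toFinset := by
      have := (S \ (b :: t).toFinset).min'_mem hne
      rw [Finset.mem_sdiff] at this; exact this
    rcases Finset.mem_insert.mp he with h | h
    · refine ⟨v, b, hvS.1, hsub b (by simp), ?_, h⟩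
      intro hvb; exact hvS.2 (by simp [hvb])
    · have hrec := ih (S := S.erase v) (fun z hz => Finset.mem_erase.mpr
        ⟨fun hzv => hvS.2 (by simp [← hzv, hz]), hsub z (by simp [hz])⟩)
        (by rw [Finset.card_erase_of_mem hvS.1, hcard]; simp)
      obtain ⟨u, w, hu, hw, huw, hee⟩ := hrec e h
      exact ⟨u, w, Finset.mem_of_mem_erase hu, Finset.mem_of_mem_erase hw, huw, hee⟩

/-- The number of decoded edges. -/
lemma decodeE_card {a : List (Fin n)} {S : Finset (Fin n)}
    (hsub : ∀ z ∈ a, z ∈ S) (hcard : S.card = a.length + 2) :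
    (decodeE a S).card = a.length + 1 := by
  induction a generalizing S with
  | nil =>
    have h2 : 1 < S.card := by simp at hcard; omega
    rw [decodeE_nil h2]; simp
  | cons b t ih =>
    have hne := sdiff_nonempty_of_card hcard
    rw [decodeE_cons hne]
    set v := (S \ (b :: t).toFinset).min' hne with hv
    have hvS : v ∈ S ∧ v ∉ (b :: t).toFinset := by
      have := (S \ (b :: t).toFinset).min'_mem hne
      rw [Finset.mem_sdiff] at this; exact this
    have hsub' : ∀ z ∈ t, z ∈ S.erase v := fun z hz => Finset.mem_erase.mpr
      ⟨fun hzv => hvS.2 (by simp [← hzv, hz]), hsub z (by simp [hz])⟩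
    have hcard' : (S.erase v).card = t.length + 2 := by
      rw [Finset.card_erase_of_mem hvS.1, hcard]; simp
    have hnotin : s(v, b) ∉ decodeE t (S.erase v) := by
      intro hmem
      obtain ⟨u, w, hu, hw, huw, hee⟩ := decodeE_mem hsub' hcard' _ hmem
      have : v ∈ s(u, w) := by rw [← hee]; simp
      rcases Sym2.mem_iff.mp this with h | h
      · exact (Finset.mem_erase.mp hu).1 h.symm
      · exact (Finset.mem_erase.mp hw).1 h.symm
    rw [Finset.card_insert_of_notMem hnotin, ih hsub' hcard']
    simp

/-- No decoded edge touches a vertex outside `S`. -/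
lemma decodeE_not_mem_vertex {a : List (Fin n)} {T : Finset (Fin n)}
    (hsub : ∀ z ∈ a, z ∈ T) (hcard : T.card = a.length + 2) {v : Fin n} (hv : v ∉ T) :
    ∀ e ∈ decodeE a T, v ∉ e := by
  intro e he hve
  obtain ⟨u, u', hu, hu', _, hee⟩ := decodeE_mem hsub hcard e he
  subst hee
  rcases Sym2.mem_iff.mp hve with h | h
  · exact hv (h ▸ hu)
  · exact hv (h ▸ hu')

lemma pair_eq_of_card_two {S : Finset (Fin n)} (h2 : S.card = 2) (hS : S.Nonempty) :
    ({S.min' hS, S.max' hS} : Finset (Fin n)) = S := by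
  have hne2 : S.min' hS ≠ S.max' hS := ne_of_lt (S.min'_lt_max'_of_card (by omega))
  apply Finset.eq_of_subset_of_card_le
  · intro z hz
    rcases Finset.mem_insert.mp hz with h | h
    · exact h ▸ S.min'_mem hS
    · exact (Finset.mem_singleton.mp h) ▸ S.max'_mem hS
  · rw [Finset.card_pair hne2]; omega

/-- The decoded edge set connects all of `S`. -/
lemma decodeE_reachable {a : List (Fin n)} {S : Finset (Fin n)}
    (hsub : ∀ z ∈ a, z ∈ S) (hcard : S.card = a.length + 2) :
    ∀ x ∈ S, ∀ y ∈ S, (SimpleGraph.fromEdgeSet (↑(decodeE a S))).Reachable x y := by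
  induction a generalizing S with
  | nil =>
    intro x hx y hy
    have h2 : 1 < S.card := by simp at hcard; omega
    have hS0 : S.Nonempty := Finset.card_pos.mp (by omega)
    have hE : decodeE [] S = {s(S.min' hS0, S.max' hS0)} := decodeE_nil h2
    rw [hE]
    have hne2 : S.min' hS0 ≠ S.max' hS0 := ne_of_lt (S.min'_lt_max'_of_card (by omega))
    have hadj : (SimpleGraph.fromEdgeSet
        (↑({s(S.min' hS0, S.max' hS0)} : Finset (Sym2 (Fin n))))).Adj
          (S.min' hS0) (S.max' hS0) := by
      rw [SimpleGraph.fromEdgeSet_adj]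
      exact ⟨by simp, hne2⟩
    have hpair := pair_eq_of_card_two (by simpa using hcard) hS0
    have hx' : x = S.min' hS0 ∨ x = S.max' hS0 := by rw [← hpair] at hx; simpa using hx
    have hy' : y = S.min' hS0 ∨ y = S.max' hS0 := by rw [← hpair] at hy; simpa using hy
    rcases hx' with h1 | h1 <;> rcases hy' with h2' | h2' <;> subst h1 <;> subst h2'
    · exact SimpleGraph.Reachable.refl _
    · exact hadj.reachable
    · exact hadj.symm.reachable
    · exact SimpleGraph.Reachable.refl _
  | cons b t ih =>
    intro x hx y hy
    have hne := sdiff_nonempty_of_card hcard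
    rw [decodeE_cons hne]
    set v := (S \ (b :: t).toFinset).min' hne with hv
    have hvS : v ∈ S ∧ v ∉ (b :: t).toFinset := by
      have := (S \ (b :: t).toFinset).min'_mem hne
      rw [Finset.mem_sdiff] at this; exact this
    have hsub' : ∀ z ∈ t, z ∈ S.erase v := fun z hz => Finset.mem_erase.mpr
      ⟨fun hzv => hvS.2 (by simp [← hzv, hz]), hsub z (by simp [hz])⟩
    have hcard' : (S.erase v).card = t.length + 2 := by
      rw [Finset.card_erase_of_mem hvS.1, hcard]; simp
    have hbS : b ∈ S.erase v := Finset.mem_erase.mpr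
      ⟨fun hbv => hvS.2 (by simp [← hbv]), hsub b (by simp)⟩
    have hmono : SimpleGraph.fromEdgeSet (↑(decodeE t (S.erase v))) ≤
        SimpleGraph.fromEdgeSet ((↑(insert s(v, b) (decodeE t (S.erase v))) :
          Set (Sym2 (Fin n)))) :=
      SimpleGraph.fromEdgeSet_mono (by exact_mod_cast Finset.subset_insert _ _)
    have hadj : (SimpleGraph.fromEdgeSet ((↑(insert s(v, b) (decodeE t (S.erase v))) :
        Set (Sym2 (Fin n))))).Adj v b := by
      rw [SimpleGraph.fromEdgeSet_adj]
      refine ⟨by simp, fun hvb => hvS.2 (by simp [hvb])⟩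
    have key : ∀ z ∈ S, (SimpleGraph.fromEdgeSet ((↑(insert s(v, b) (decodeE t (S.erase v))) :
        Set (Sym2 (Fin n))))).Reachable v z := by
      intro z hz
      rcases eq_or_ne z v with h | h
      · exact h ▸ SimpleGraph.Reachable.refl _
      · exact hadj.reachable.trans
          (((ih hsub' hcard') b hbS z (Finset.mem_erase.mpr ⟨h, hz⟩)).mono hmono)
    exact (key x hx).symm.trans (key y hy)

/-- Degree of a vertex in an edge finset. -/
def degE (E : Finset (Sym2 (Fin n))) (w : Fin n) : ℕ := (E.filter (fun e => w ∈ e)).card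

lemma degE_eq_zero {a : List (Fin n)} {S : Finset (Fin n)}
    (hsub : ∀ z ∈ a, z ∈ S) (hcard : S.card = a.length + 2)
    {w : Fin n} (hw : w ∉ S) : degE (decodeE a S) w = 0 := by
  rw [degE, Finset.card_eq_zero, Finset.filter_eq_empty_iff]
  intro e he
  exact decodeE_not_mem_vertex hsub hcard hw e he

lemma decodeE_degree {a : List (Fin n)} {S : Finset (Fin n)}
    (hsub : ∀ z ∈ a, z ∈ S) (hcard : S.card = a.length + 2) :
    ∀ w ∈ S, degE (decodeE a S) w = a.count w + 1 := by
  induction a generalizing S with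
  | nil =>
    intro w hw
    have h2 : 1 < S.card := by simp at hcard; omega
    have hS0 : S.Nonempty := Finset.card_pos.mp (by omega)
    have hE : decodeE [] S = {s(S.min' hS0, S.max' hS0)} := decodeE_nil h2
    rw [hE]
    have hpair := pair_eq_of_card_two (by simpa using hcard) hS0
    have hw' : w = S.min' hS0 ∨ w = S.max' hS0 := by rw [← hpair] at hw; simpa using hw
    have hmem : w ∈ s(S.min' hS0, S.max' hS0) := by
      rcases hw' with h | h <;> rw [h] <;> simp
    rw [degE, Finset.filter_singleton, if_pos hmem]
    simp
  | cons b t ih =>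
    intro w hw
    have hne := sdiff_nonempty_of_card hcard
    rw [decodeE_cons hne]
    set v := (S \ (b :: t).toFinset).min' hne with hv
    have hvS : v ∈ S ∧ v ∉ (b :: t).toFinset := by
      have := (S \ (b :: t).toFinset).min'_mem hne
      rw [Finset.mem_sdiff] at this; exact this
    have hsub' : ∀ z ∈ t, z ∈ S.erase v := fun z hz => Finset.mem_erase.mpr
      ⟨fun hzv => hvS.2 (by simp [← hzv, hz]), hsub z (by simp [hz])⟩
    have hcard' : (S.erase v).card = t.length + 2 := by
      rw [Finset.card_erase_of_mem hvS.1, hcard]; simp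
    have hnotin : s(v, b) ∉ decodeE t (S.erase v) := fun hmem =>
      decodeE_not_mem_vertex hsub' hcard' (S.notMem_erase v) _ hmem (by simp)
    have hdeg_insert : degE (insert s(v, b) (decodeE t (S.erase v))) w =
        degE (decodeE t (S.erase v)) w + (if w ∈ s(v, b) then 1 else 0) := by
      rw [degE, degE, Finset.filter_insert]
      split_ifs with h
      · rw [Finset.card_insert_of_notMem (fun hc => hnotin (Finset.mem_filter.mp hc).1)]
      · rw [Nat.add_zero]
    have hcc : (b :: t).count w = t.count w + if w = b then 1 else 0 := by
      rcases eq_or_ne w b with h | h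
      · subst h; simp [List.count_cons]
      · simp [List.count_cons, h, Ne.symm h]
    rcases eq_or_ne w v with hwv | hwv
    · rw [hdeg_insert, hwv, degE_eq_zero hsub' hcard' (Finset.notMem_erase _ _),
        if_pos (by simp)]
      have hvbt : v ∉ (b :: t) := fun hc => hvS.2 (List.mem_toFinset.mpr hc)
      rw [List.count_eq_zero_of_not_mem hvbt]
    · have hwS' : w ∈ S.erase v := Finset.mem_erase.mpr ⟨hwv, hw⟩
      rw [hdeg_insert, ih hsub' hcard' w hwS', hcc]
      have hmem_iff : w ∈ s(v, b) ↔ w = b := by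
        rw [Sym2.mem_iff]; simp [hwv]
      rcases eq_or_ne w b with hwb | hwb
      · rw [if_pos (hmem_iff.mpr hwb), if_pos hwb]
      · rw [if_neg (fun hc => hwb (hmem_iff.mp hc)), if_neg hwb]

/-- Injectivity of the decoding. -/
lemma decodeE_inj {a a' : List (Fin n)} {S : Finset (Fin n)}
    (hsub : ∀ z ∈ a, z ∈ S) (hcard : S.card = a.length + 2)
    (hsub' : ∀ z ∈ a', z ∈ S) (hcard' : S.card = a'.length + 2)
    (heq : decodeE a S = decodeE a' S) : a = a' := by
  induction a generalizing a' S with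
  | nil =>
    cases a' with
    | nil => rfl
    | cons b' t' => simp at hcard hcard'; omega
  | cons b t ih =>
    cases a' with
    | nil => simp at hcard hcard'; omega
    | cons b' t' =>
      have hne := sdiff_nonempty_of_card hcard
      have hne' := sdiff_nonempty_of_card hcard'
      set v := (S \ (b :: t).toFinset).min' hne with hv
      set v' := (S \ (b' :: t').toFinset).min' hne' with hv'
      have hcnt : ∀ w ∈ S, (b :: t).count w = (b' :: t').count w := by
        intro w hw
        have h1 := decodeE_degree hsub hcard w hw
        have h2 := decodeE_degree hsub' hcard' w hw
        rw [heq, h2] at h1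
        omega
      have hset : S \ (b :: t).toFinset = S \ (b' :: t').toFinset := by
        ext w
        simp only [Finset.mem_sdiff, List.mem_toFinset]
        constructor
        · rintro ⟨hwS, hwt⟩
          refine ⟨hwS, fun hc => hwt ?_⟩
          have := hcnt w hwS
          rw [← List.count_pos_iff] at hc ⊢
          omega
        · rintro ⟨hwS, hwt⟩
          refine ⟨hwS, fun hc => hwt ?_⟩
          have := hcnt w hwS
          rw [← List.count_pos_iff] at hc ⊢
          omega
      have hvv : v = v' := by
        apply le_antisymm
        · exact Finset.min'_le _ _ (hset ▸ (S \ (b' :: t').toFinset).min'_mem hne')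
        · exact Finset.min'_le _ _ (hset.symm ▸ (S \ (b :: t).toFinset).min'_mem hne)
      have hvS : v ∈ S ∧ v ∉ (b :: t).toFinset := by
        have := (S \ (b :: t).toFinset).min'_mem hne
        rw [Finset.mem_sdiff] at this; exact this
      have hv'S : v ∉ (b' :: t').toFinset := by
        have := (S \ (b' :: t').toFinset).min'_mem hne'
        rw [Finset.mem_sdiff] at this
        rw [← hv', ← hvv] at this
        exact this.2
      have hsubt : ∀ z ∈ t, z ∈ S.erase v := fun z hz => Finset.mem_erase.mpr
        ⟨fun hzv => hvS.2 (by simp [← hzv, hz]), hsub z (by simp [hz])⟩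
      have hcardt : (S.erase v).card = t.length + 2 := by
        rw [Finset.card_erase_of_mem hvS.1, hcard]; simp
      have hsubt' : ∀ z ∈ t', z ∈ S.erase v := fun z hz => Finset.mem_erase.mpr
        ⟨fun hzv => hv'S (by simp [← hzv, hz]), hsub' z (by simp [hz])⟩
      have hcardt' : (S.erase v).card = t'.length + 2 := by
        rw [Finset.card_erase_of_mem hvS.1, hcard']; simp
      have hnotin1 : s(v, b) ∉ decodeE t (S.erase v) := fun hmem =>
        decodeE_not_mem_vertex hsubt hcardt (S.notMem_erase v) _ hmem (by simp)
      have hnotin2 : s(v, b') ∉ decodeE t' (S.erase v) := fun hmem =>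
        decodeE_not_mem_vertex hsubt' hcardt' (S.notMem_erase v) _ hmem (by simp)
      have hnotin2b : s(v, b) ∉ decodeE t' (S.erase v) := fun hmem =>
        decodeE_not_mem_vertex hsubt' hcardt' (S.notMem_erase v) _ hmem (by simp)
      rw [decodeE_cons hne, decodeE_cons hne'] at heq
      rw [← hv, ← hv'] at heq
      rw [← hvv] at heq
      have hbb : b = b' := by
        have hmem : s(v, b) ∈ insert s(v, b') (decodeE t' (S.erase v)) := by
          rw [← heq]; exact Finset.mem_insert_self _ _
        rcases Finset.mem_insert.mp hmem with h | h
        · rcases Sym2.eq_iff.mp h with ⟨_, hb⟩ | ⟨hvb', hbv⟩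
          · exact hb
          · exact absurd (by simp [← hvb'] : v ∈ (b' :: t').toFinset) hv'S
        · exact absurd h hnotin2b
      subst hbb
      have htails : decodeE t (S.erase v) = decodeE t' (S.erase v) := by
        have h1 : decodeE t (S.erase v) =
            (insert s(v, b) (decodeE t (S.erase v))).erase s(v, b) :=
          (Finset.erase_insert hnotin1).symm
        rw [h1, heq, Finset.erase_insert hnotin2]
      rw [ih hsubt hcardt hsubt' hcardt' htails]


/-! ### Events and their measures -/

/-- Non-loop edges with at least one endpoint in `S`. -/
def cutF (S : Finset (Fin n)) : Finset (Sym2 (Fin n)) :=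
  Finset.univ.filter (fun e => ¬ e.IsDiag ∧ ∃ x ∈ S, x ∈ e)

lemma mem_cutF {S : Finset (Fin n)} {e : Sym2 (Fin n)} :
    e ∈ cutF S ↔ ¬ e.IsDiag ∧ ∃ x ∈ S, x ∈ e := by simp [cutF]

lemma cutF_card_le {S : Finset (Fin n)} : (cutF S).card ≤ S.card * n := by
  have hsub : cutF S ⊆ S.biUnion (fun x => Finset.univ.image (fun y => s(x, y))) := by
    intro e he
    obtain ⟨-, x, hx, hxe⟩ := mem_cutF.mp he
    obtain ⟨y, hy⟩ := Sym2.mem_iff_exists.mp hxe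
    exact Finset.mem_biUnion.mpr ⟨x, hx, Finset.mem_image.mpr ⟨y, Finset.mem_univ y, hy.symm⟩⟩
  calc (cutF S).card ≤ _ := Finset.card_le_card hsub
    _ ≤ ∑ x ∈ S, (Finset.univ.image (fun y => s(x, y))).card := Finset.card_biUnion_le
    _ ≤ ∑ x ∈ S, n := by
        refine Finset.sum_le_sum fun x _ => ?_
        calc (Finset.univ.image (fun y => s(x, y))).card ≤ (Finset.univ : Finset (Fin n)).card :=
          Finset.card_image_le
        _ = n := Finset.card_univ.trans (Fintype.card_fin n)
    _ = S.card * n := by rw [Finset.sum_const, smul_eq_mul]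

/-- The event that all edges of `E` are present and all other edges touching `S` are absent. -/
def eventA (E : Finset (Sym2 (Fin n))) (S : Finset (Fin n)) : Set (Sym2 (Fin n) → Bool) :=
  Set.univ.pi (fun e => if e ∈ E then ({true} : Set Bool)
    else if e ∈ cutF S then ({false} : Set Bool) else Set.univ)

lemma mem_eventA_true {E : Finset (Sym2 (Fin n))} {S : Finset (Fin n)} {ω : Sym2 (Fin n) → Bool}
    (h : ω ∈ eventA E S) {e : Sym2 (Fin n)} (he : e ∈ E) : ω e = true := by
  simpa [he] using h e (Set.mem_univ e)

lemma mem_eventA_false {E : Finset (Sym2 (Fin n))} {S : Finset (Fin n)} {ω : Sym2 (Fin n) → Bool}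
    (h : ω ∈ eventA E S) {e : Sym2 (Fin n)} (he : e ∉ E) (hc : e ∈ cutF S) : ω e = false := by
  simpa [he, hc] using h e (Set.mem_univ e)

lemma erMeasure_eventA {E : Finset (Sym2 (Fin n))} {S : Finset (Fin n)} (hE : E ⊆ cutF S) :
    erMeasure n (eventA E S) =
      (min (n : ℝ≥0∞)⁻¹ 1) ^ E.card * (1 - min (n : ℝ≥0∞)⁻¹ 1) ^ (cutF S \ E).card := by
  have hple : min (n : ℝ≥0∞)⁻¹ 1 ≤ 1 := min_le_right _ _
  rw [erMeasure, eventA, MeasureTheory.Measure.pi_pi]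
  have hval : ∀ e : Sym2 (Fin n),
      (PMF.bernoulli (min (n : ℝ≥0∞)⁻¹ 1).toNNReal
    ((ENNReal.toNNReal_mono ENNReal.one_ne_top (min_le_right _ _)).trans_eq ENNReal.toNNReal_one)).toMeasure (if e ∈ E then ({true} : Set Bool)
          else if e ∈ cutF S then ({false} : Set Bool) else Set.univ)
        = if e ∈ E then min (n : ℝ≥0∞)⁻¹ 1 else if e ∈ cutF S then 1 - min (n : ℝ≥0∞)⁻¹ 1
            else 1 := by
    intro e
    split_ifs with h1 h2
    · rw [PMF.toMeasure_apply_singleton _ _ (measurableSet_singleton _), PMF.bernoulli_apply]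
      simp [ENNReal.coe_sub, ENNReal.coe_toNNReal (ne_top_of_le_ne_top ENNReal.one_ne_top hple)]
    · rw [PMF.toMeasure_apply_singleton _ _ (measurableSet_singleton _), PMF.bernoulli_apply]
      simp [ENNReal.coe_sub, ENNReal.coe_toNNReal (ne_top_of_le_ne_top ENNReal.one_ne_top hple)]
    · exact measure_univ
  rw [Finset.prod_congr rfl (fun e _ => hval e)]
  rw [← Finset.prod_subset (Finset.subset_univ (cutF S)) (fun e _ hec => by
    rw [if_neg (fun heE => hec (hE heE)), if_neg hec])]
  have h3 : ∏ e ∈ cutF S, (if e ∈ E then min (n : ℝ≥0∞)⁻¹ 1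
        else if e ∈ cutF S then 1 - min (n : ℝ≥0∞)⁻¹ 1 else 1) =
      (∏ e ∈ E, (if e ∈ E then min (n : ℝ≥0∞)⁻¹ 1
        else if e ∈ cutF S then 1 - min (n : ℝ≥0∞)⁻¹ 1 else 1)) *
      ∏ e ∈ cutF S \ E, (if e ∈ E then min (n : ℝ≥0∞)⁻¹ 1
        else if e ∈ cutF S then 1 - min (n : ℝ≥0∞)⁻¹ 1 else 1) := by
    rw [← Finset.prod_union Finset.disjoint_sdiff, Finset.union_sdiff_of_subset hE]
  rw [h3]
  congr 1
  · rw [Finset.prod_congr rfl (fun e heE => if_pos heE), Finset.prod_const]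
  · rw [Finset.prod_congr rfl (fun e heD => by
      rw [if_neg (Finset.mem_sdiff.mp heD).2,
        if_pos (Finset.mem_sdiff.mp heD).1]), Finset.prod_const]

lemma eventA_reachSet {E : Finset (Sym2 (Fin n))} {S : Finset (Fin n)}
    (hES : ∀ e ∈ E, ∃ u v : Fin n, u ∈ S ∧ v ∈ S ∧ u ≠ v ∧ e = s(u, v))
    (hconn : ∀ x ∈ S, ∀ y ∈ S,
      (SimpleGraph.fromEdgeSet (↑E : Set (Sym2 (Fin n)))).Reachable x y)
    {ω : Sym2 (Fin n) → Bool} (hω : ω ∈ eventA E S) {z : Fin n} (hz : z ∈ S) :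
    {w | (graphOf ω).Reachable z w} = (↑S : Set (Fin n)) := by
  have hle : SimpleGraph.fromEdgeSet (↑E : Set (Sym2 (Fin n))) ≤ graphOf ω := by
    intro a b hab
    rw [SimpleGraph.fromEdgeSet_adj] at hab
    exact ⟨hab.2, mem_eventA_true hω (by exact_mod_cast hab.1)⟩
  have hclosed : ∀ u w : Fin n, u ∈ S → (graphOf ω).Adj u w → w ∈ S := by
    intro u w hu hadj
    by_contra hw
    have hne : u ≠ w := hadj.1
    have hniE : s(u, w) ∉ E := by
      intro hmem
      obtain ⟨x, y, hx, hy, hxy, hee⟩ := hES _ hmem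
      have hwm : w ∈ s(x, y) := hee ▸ (by simp : w ∈ s(u, w))
      rcases Sym2.mem_iff.mp hwm with h | h
      exacts [hw (h ▸ hx), hw (h ▸ hy)]
    have hcut : s(u, w) ∈ cutF S :=
      mem_cutF.mpr ⟨by rw [Sym2.mk_isDiag_iff]; exact hne, ⟨u, hu, by simp⟩⟩
    have hfalse := mem_eventA_false hω hniE hcut
    rw [hadj.2] at hfalse
    cases hfalse
  have haux : ∀ (u w : Fin n), (graphOf ω).Walk u w → u ∈ S → w ∈ S := by
    intro u w pw
    induction pw with
    | nil => exact id
    | cons h q ih => intro hu; exact ih (hclosed _ _ hu h)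
  ext w
  simp only [Set.mem_setOf_eq, Finset.mem_coe]
  constructor
  · rintro ⟨pw⟩
    exact haux _ _ pw hz
  · intro hw
    exact (hconn z hz w hw).mono hle

lemma eventA_compSize {E : Finset (Sym2 (Fin n))} {S : Finset (Fin n)}
    (hES : ∀ e ∈ E, ∃ u v : Fin n, u ∈ S ∧ v ∈ S ∧ u ≠ v ∧ e = s(u, v))
    (hconn : ∀ x ∈ S, ∀ y ∈ S,
      (SimpleGraph.fromEdgeSet (↑E : Set (Sym2 (Fin n)))).Reachable x y)
    {ω : Sym2 (Fin n) → Bool} (hω : ω ∈ eventA E S) {z : Fin n} (hz : z ∈ S) :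
    compSize (graphOf ω) z = S.card := by
  rw [compSize, eventA_reachSet hES hconn hω hz, Nat.card_coe_set_eq,
    Set.ncard_coe_finset]

lemma eventA_disjoint_same {E E' : Finset (Sym2 (Fin n))} {S : Finset (Fin n)} (hE : E ⊆ cutF S)
    (hE' : E' ⊆ cutF S) (hne : E ≠ E') : Disjoint (eventA E S) (eventA E' S) := by
  rw [Set.disjoint_left]
  intro ω h1 h2
  have hex : ∃ e, (e ∈ E ∧ e ∉ E') ∨ (e ∈ E' ∧ e ∉ E) := by
    by_contra hc
    push_neg at hc
    exact hne (Finset.ext fun e => ⟨(hc e).1, (hc e).2⟩)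
  obtain ⟨e, he⟩ := hex
  rcases he with ⟨h3, h4⟩ | ⟨h3, h4⟩
  · have t1 := mem_eventA_true h1 h3
    have t2 := mem_eventA_false h2 h4 (hE h3)
    rw [t1] at t2
    cases t2
  · have t1 := mem_eventA_true h2 h3
    have t2 := mem_eventA_false h1 h4 (hE' h3)
    rw [t1] at t2
    cases t2


/-! ### The main counting bound -/

lemma erMeasure_comp_ge {j : ℕ} (hn : 0 < n) (hj2 : 2 ≤ j) :
    ((((n - 1).choose (j - 1) * j ^ (j - 2) : ℕ)) : ℝ≥0∞) *
        ((min (n : ℝ≥0∞)⁻¹ 1) ^ (j - 1) * (1 - min (n : ℝ≥0∞)⁻¹ 1) ^ (j * n)) ≤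
      erMeasure n {ω | compSize (graphOf ω) ⟨0, hn⟩ = j} := by
  classical
  set z0 : Fin n := ⟨0, hn⟩
  set 𝒮 : Finset (Finset (Fin n)) := Finset.powersetCard (j - 1) (Finset.univ.erase z0) with h𝒮
  set ι : Finset ((_ : Finset (Fin n)) × (Fin (j - 2) → Fin n)) :=
    𝒮.sigma (fun S' => Fintype.piFinset (fun _ : Fin (j - 2) => insert z0 S')) with hι
  set A : ((_ : Finset (Fin n)) × (Fin (j - 2) → Fin n)) → Set (Sym2 (Fin n) → Bool) :=
    fun i => eventA (decodeE (List.ofFn i.2) (insert z0 i.1)) (insert z0 i.1) with hA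
  -- basic facts for indices in ι
  have hfacts : ∀ i ∈ ι, (∀ z ∈ List.ofFn i.2, z ∈ insert z0 i.1) ∧
      (insert z0 i.1).card = (List.ofFn i.2).length + 2 ∧ (insert z0 i.1).card = j ∧
      z0 ∈ insert z0 i.1 := by
    intro i hi
    rw [hι, Finset.mem_sigma] at hi
    obtain ⟨hS', hf⟩ := hi
    rw [h𝒮, Finset.mem_powersetCard] at hS'
    have hz0 : z0 ∉ i.1 := fun hc => (Finset.mem_erase.mp (hS'.1 hc)).1 rfl
    have hcard : (insert z0 i.1).card = j := by
      rw [Finset.card_insert_of_notMem hz0, hS'.2]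
      omega
    refine ⟨?_, ?_, hcard, Finset.mem_insert_self _ _⟩
    · intro z hz
      obtain ⟨k, hk⟩ := List.mem_ofFn.mp hz
      exact hk ▸ (Fintype.mem_piFinset.mp hf) k
    · rw [hcard, List.length_ofFn]
      omega
  have hEfacts : ∀ i ∈ ι,
      decodeE (List.ofFn i.2) (insert z0 i.1) ⊆ cutF (insert z0 i.1) ∧
      (decodeE (List.ofFn i.2) (insert z0 i.1)).card = j - 1 := by
    intro i hi
    obtain ⟨hsub, hcard2, hcardj, -⟩ := hfacts i hi
    constructor
    · intro e he
      obtain ⟨u, v, hu, hv, huv, hee⟩ := decodeE_mem hsub hcard2 e he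
      subst hee
      exact mem_cutF.mpr ⟨by rw [Sym2.mk_isDiag_iff]; exact huv, ⟨u, hu, by simp⟩⟩
    · rw [decodeE_card hsub hcard2, List.length_ofFn]
      omega
  -- each event is contained in the target event
  have hsub_event : ∀ i ∈ ι, A i ⊆ {ω | compSize (graphOf ω) ⟨0, hn⟩ = j} := by
    intro i hi ω hω
    obtain ⟨hsub, hcard2, hcardj, hz0S⟩ := hfacts i hi
    have := eventA_compSize (decodeE_mem hsub hcard2) (decodeE_reachable hsub hcard2)
      hω hz0S
    simpa [hcardj] using this
  -- pairwise disjointness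
  have hdisj : (↑ι : Set _).PairwiseDisjoint A := by
    intro x hx y hy hxy
    have hx' := hx; have hy' := hy
    rw [Finset.mem_coe] at hx' hy'
    obtain ⟨hsubx, hcard2x, hcardjx, hz0x⟩ := hfacts x hx'
    obtain ⟨hsuby, hcard2y, hcardjy, hz0y⟩ := hfacts y hy'
    simp only [Function.onFun]
    rcases eq_or_ne x.1 y.1 with hS | hS
    · -- same vertex set, different lists
      have hff : x.2 ≠ y.2 := by
        intro hc
        exact hxy (Sigma.ext hS (by rw [hc]))
      have hAy : A y = eventA (decodeE (List.ofFn y.2) (insert z0 x.1)) (insert z0 x.1) := by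
        rw [hS]
      have hsuby' : ∀ z ∈ List.ofFn y.2, z ∈ insert z0 x.1 := by rw [hS]; exact hsuby
      have hcard2y' : (insert z0 x.1).card = (List.ofFn y.2).length + 2 := by
        rw [hS]; exact hcard2y
      have hEE : decodeE (List.ofFn x.2) (insert z0 x.1) ≠
          decodeE (List.ofFn y.2) (insert z0 x.1) := by
        intro hc
        have := decodeE_inj hsubx hcard2x hsuby' hcard2y' hc
        exact hff (List.ofFn_injective this)
      rw [hAy]
      have hEsuby' : decodeE (List.ofFn y.2) (insert z0 x.1) ⊆ cutF (insert z0 x.1) := by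
        rw [hS]; exact (hEfacts y hy').1
      exact eventA_disjoint_same (hEfacts x hx').1 hEsuby' hEE
    · -- different vertex sets
      rw [Set.disjoint_left]
      intro ω hωx hωy
      have h1 := eventA_reachSet (decodeE_mem hsubx hcard2x)
        (decodeE_reachable hsubx hcard2x) hωx hz0x
      have h2 := eventA_reachSet (decodeE_mem hsuby hcard2y)
        (decodeE_reachable hsuby hcard2y) hωy hz0y
      rw [h1] at h2
      have hSS : insert z0 x.1 = insert z0 y.1 := Finset.coe_injective h2
      apply hS
      have hz0x' : z0 ∉ x.1 := by
        rw [hι, Finset.mem_sigma] at hx'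
        have := (Finset.mem_powersetCard.mp (by rw [h𝒮] at hx'; exact hx'.1)).1
        exact fun hc => (Finset.mem_erase.mp (this hc)).1 rfl
      have hz0y' : z0 ∉ y.1 := by
        rw [hι, Finset.mem_sigma] at hy'
        have := (Finset.mem_powersetCard.mp (by rw [h𝒮] at hy'; exact hy'.1)).1
        exact fun hc => (Finset.mem_erase.mp (this hc)).1 rfl
      rw [← Finset.erase_insert hz0x', ← Finset.erase_insert hz0y', hSS]
  -- the per-event lower bound
  have hone : ∀ i ∈ ι, (min (n : ℝ≥0∞)⁻¹ 1) ^ (j - 1) *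
      (1 - min (n : ℝ≥0∞)⁻¹ 1) ^ (j * n) ≤ erMeasure n (A i) := by
    intro i hi
    obtain ⟨hEsub, hEcard⟩ := hEfacts i hi
    obtain ⟨-, -, hcardj, -⟩ := hfacts i hi
    have hAi : A i = eventA (decodeE (List.ofFn i.2) (insert z0 i.1)) (insert z0 i.1) := rfl
    rw [hAi, erMeasure_eventA hEsub, hEcard]
    refine mul_le_mul_right ?_ _
    apply pow_le_pow_of_le_one (by positivity) tsub_le_self
    calc (cutF (insert z0 i.1) \ decodeE (List.ofFn i.2) (insert z0 i.1)).card
        ≤ (cutF (insert z0 i.1)).card := Finset.card_le_card (Finset.sdiff_subset)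
      _ ≤ (insert z0 i.1).card * n := cutF_card_le
      _ = j * n := by rw [hcardj]
  -- cardinality of the index set
  have hcardι : ι.card = (n - 1).choose (j - 1) * j ^ (j - 2) := by
    rw [hι, Finset.card_sigma]
    have : ∀ S' ∈ 𝒮, (Fintype.piFinset (fun _ : Fin (j - 2) => insert z0 S')).card =
        j ^ (j - 2) := by
      intro S' hS'
      rw [Fintype.card_piFinset]
      rw [h𝒮, Finset.mem_powersetCard] at hS'
      have hz0 : z0 ∉ S' := fun hc => (Finset.mem_erase.mp (hS'.1 hc)).1 rfl
      have : (insert z0 S').card = j := by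
        rw [Finset.card_insert_of_notMem hz0, hS'.2]; omega
      rw [Finset.prod_const, this, Finset.card_univ, Fintype.card_fin]
    rw [Finset.sum_congr rfl this, Finset.sum_const, smul_eq_mul, h𝒮,
      Finset.card_powersetCard, Finset.card_erase_of_mem (Finset.mem_univ _),
      Finset.card_univ, Fintype.card_fin]
  -- put everything together
  calc ((((n - 1).choose (j - 1) * j ^ (j - 2) : ℕ)) : ℝ≥0∞) *
        ((min (n : ℝ≥0∞)⁻¹ 1) ^ (j - 1) * (1 - min (n : ℝ≥0∞)⁻¹ 1) ^ (j * n))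
      = ∑ _i ∈ ι, ((min (n : ℝ≥0∞)⁻¹ 1) ^ (j - 1) *
          (1 - min (n : ℝ≥0∞)⁻¹ 1) ^ (j * n)) := by
        rw [Finset.sum_const, hcardι, nsmul_eq_mul]
    _ ≤ ∑ i ∈ ι, erMeasure n (A i) := Finset.sum_le_sum hone
    _ = erMeasure n (⋃ i ∈ ι, A i) :=
        (measure_biUnion_finset hdisj (fun i _ => (Set.toFinite _).measurableSet)).symm
    _ ≤ erMeasure n {ω | compSize (graphOf ω) ⟨0, hn⟩ = j} := by
        apply MeasureTheory.measure_mono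
        intro ω hω
        simp only [Set.mem_iUnion] at hω
        obtain ⟨i, hi, hωi⟩ := hω
        exact hsub_event i hi hωi


lemma exp_neg_le_one_sub {x : ℝ} (hx0 : 0 ≤ x) (hx : x ≤ 1/4) :
    Real.exp (-(x + x^2)) ≤ 1 - x := by
  set t := x + x^2 with ht
  have ht0 : 0 ≤ t := by positivity
  have hK : (1 + t/2)^2 ≤ Real.exp t := by
    have h1 : 1 + t/2 ≤ Real.exp (t/2) := by
      have := Real.add_one_le_exp (t/2)
      linarith
    have h2 : (1 + t/2)^2 ≤ (Real.exp (t/2))^2 := by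
      apply pow_le_pow_left₀ (by positivity) h1
    calc (1 + t/2)^2 ≤ (Real.exp (t/2))^2 := h2
      _ = Real.exp t := by rw [← Real.exp_nat_mul]; congr 1; ring
  have hkey : 1 ≤ (1 - x) * Real.exp t := by
    have hpoly : 1 ≤ (1 - x) * (1 + t/2)^2 := by
      rw [ht]
      nlinarith [sq_nonneg x, mul_nonneg hx0 (sq_nonneg x), mul_nonneg (mul_nonneg hx0 hx0) (sq_nonneg x),
        mul_nonneg hx0 (mul_nonneg hx0 (sq_nonneg x)), sq_nonneg (x*x)]
    calc (1:ℝ) ≤ (1 - x) * (1 + t/2)^2 := hpoly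
      _ ≤ (1 - x) * Real.exp t := by
          apply mul_le_mul_of_nonneg_left hK (by linarith)
  rw [Real.exp_neg, inv_eq_one_div, div_le_iff₀ (Real.exp_pos _)]
  linarith [hkey]

lemma stirling_bound (m : ℕ) :
    Real.exp m * (Nat.factorial m : ℝ) ≤ ((m:ℝ) + 1)^m * Real.sqrt ((m:ℝ) + 1) := by
  -- from the monotonicity of the Stirling sequence
  have hanti := Stirling.log_stirlingSeq'_antitone (Nat.zero_le m)
  simp only [Function.comp] at hanti
  -- hanti : log (stirlingSeq (m+1)) ≤ log (stirlingSeq 1)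
  have hpos1 : 0 < Stirling.stirlingSeq (m + 1) := Stirling.stirlingSeq'_pos m
  have hpos2 : 0 < Stirling.stirlingSeq 1 := Stirling.stirlingSeq'_pos 0
  have hle : Stirling.stirlingSeq (m + 1) ≤ Stirling.stirlingSeq 1 := by
    have := (Real.log_le_log_iff hpos1 hpos2).mp (by simpa using hanti)
    exact this
  rw [Stirling.stirlingSeq_one] at hle
  rw [Stirling.stirlingSeq] at hle
  -- hle : (m+1)! / (√(2(m+1)) * ((m+1)/e)^(m+1)) ≤ e/√2
  have hfact : ((m+1).factorial : ℝ) ≤ (Real.exp 1 / Real.sqrt 2) *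
      (Real.sqrt (2 * (m+1)) * (((m:ℝ)+1) / Real.exp 1)^(m+1)) := by
    rw [div_le_iff₀ (by positivity)] at hle
    calc ((m+1).factorial : ℝ) = _ := by push_cast; ring
    _ ≤ _ := hle.trans_eq (by push_cast; ring)
  have hsqrt : Real.sqrt (2 * ((m:ℝ)+1)) = Real.sqrt 2 * Real.sqrt ((m:ℝ)+1) :=
    Real.sqrt_mul (by norm_num) _
  have hfac2 : ((m+1).factorial : ℝ) = ((m:ℝ)+1) * (m.factorial : ℝ) := by
    rw [Nat.factorial_succ]; push_cast; ring
  have hexp : (Real.exp 1)^(m+1) = Real.exp 1 * Real.exp m := by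
    rw [← Real.exp_nat_mul]
    rw [← Real.exp_add]
    congr 1
    push_cast; ring
  have he1 : (0:ℝ) < Real.exp 1 := Real.exp_pos 1
  have hem : (0:ℝ) < Real.exp m := Real.exp_pos m
  have hm1 : (0:ℝ) < (m:ℝ) + 1 := by positivity
  have hs2 : (0:ℝ) < Real.sqrt 2 := by positivity
  rw [hfac2] at hfact
  rw [hsqrt] at hfact
  rw [div_pow, hexp] at hfact
  -- now clean up
  have := hfact
  rw [pow_succ] at this
  -- (m+1)^(m+1) = (m+1)^m * (m+1)
  have key : ((m:ℝ)+1) * (m.factorial : ℝ) ≤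
      Real.exp 1 / Real.sqrt 2 * (Real.sqrt 2 * Real.sqrt ((m:ℝ)+1) *
        (((m:ℝ)+1)^m * ((m:ℝ)+1) / (Real.exp 1 * Real.exp m))) := this
  have h2 : (m.factorial : ℝ) ≤ Real.sqrt ((m:ℝ)+1) * (((m:ℝ)+1)^m / Real.exp m) := by
    have hclean : Real.exp 1 / Real.sqrt 2 * (Real.sqrt 2 * Real.sqrt ((m:ℝ)+1) *
        (((m:ℝ)+1)^m * ((m:ℝ)+1) / (Real.exp 1 * Real.exp m))) =
        ((m:ℝ)+1) * (Real.sqrt ((m:ℝ)+1) * (((m:ℝ)+1)^m / Real.exp m)) := by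
      field_simp
    rw [hclean] at key
    exact le_of_mul_le_mul_left key hm1
  calc Real.exp m * (m.factorial : ℝ) ≤
      Real.exp m * (Real.sqrt ((m:ℝ)+1) * (((m:ℝ)+1)^m / Real.exp m)) := by
        apply mul_le_mul_of_nonneg_left h2 (le_of_lt hem)
    _ = ((m:ℝ)+1)^m * Real.sqrt ((m:ℝ)+1) := by field_simp


lemma analysis_main {n j : ℕ} (hj2 : 2 ≤ j) (hn5 : j ^ 5 ≤ n) :
    Real.exp (-4) * (j : ℝ) ^ (-(3 : ℝ) / 2) ≤
      (((n - 1).choose (j - 1) * j ^ (j - 2) : ℕ) : ℝ) *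
        ((1 / (n : ℝ)) ^ (j - 1) * (1 - 1 / (n : ℝ)) ^ (j * n)) := by
  have hn32 : 32 ≤ n := by
    have h25 : 2 ^ 5 ≤ j ^ 5 := Nat.pow_le_pow_left hj2 5
    omega
  have hn0 : 0 < n := by omega
  have hnR : (0 : ℝ) < n := by exact_mod_cast hn0
  set x : ℝ := 1 / (n : ℝ) with hxdef
  have hx0 : 0 < x := by positivity
  have hnx : (n : ℝ) * x = 1 := by rw [hxdef]; field_simp
  have hx32 : x ≤ 1 / 32 := by
    rw [hxdef, div_le_div_iff₀ hnR (by norm_num)]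
    have : (32 : ℝ) ≤ n := by exact_mod_cast hn32
    linarith
  have hjR : (0 : ℝ) < j := by positivity
  have hsj : (0 : ℝ) < Real.sqrt j := Real.sqrt_pos.mpr hjR
  -- j * x ≤ 1/16 and j^2 * x ≤ 1/8
  have h16j : (16 * j : ℕ) ≤ n := by
    have h4 : (16 : ℕ) ≤ j ^ 4 := by
      calc (16 : ℕ) = 2 ^ 4 := by norm_num
        _ ≤ j ^ 4 := Nat.pow_le_pow_left hj2 4
    calc 16 * j ≤ j ^ 4 * j := Nat.mul_le_mul_right j h4
      _ = j ^ 5 := by ring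
      _ ≤ n := hn5
  have h8j2 : (8 * j ^ 2 : ℕ) ≤ n := by
    have h3 : (8 : ℕ) ≤ j ^ 3 := by
      calc (8 : ℕ) = 2 ^ 3 := by norm_num
        _ ≤ j ^ 3 := Nat.pow_le_pow_left hj2 3
    calc 8 * j ^ 2 ≤ j ^ 3 * j ^ 2 := Nat.mul_le_mul_right (j ^ 2) h3
      _ = j ^ 5 := by ring
      _ ≤ n := hn5
  have hjx : (j : ℝ) * x ≤ 1 / 16 := by
    have h1 : ((16 * j : ℕ) : ℝ) * x ≤ (n : ℝ) * x :=
      mul_le_mul_of_nonneg_right (by exact_mod_cast h16j) hx0.le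
    rw [hnx] at h1
    push_cast at h1
    linarith
  have hj2x : (j : ℝ) ^ 2 * x ≤ 1 / 8 := by
    have h1 : ((8 * j ^ 2 : ℕ) : ℝ) * x ≤ (n : ℝ) * x :=
      mul_le_mul_of_nonneg_right (by exact_mod_cast h8j2) hx0.le
    rw [hnx] at h1
    push_cast at h1
    linarith
  -- notation
  set C : ℝ := ((n - 1).choose (j - 1) : ℝ) with hC
  set F : ℝ := ((j - 1).factorial : ℝ) with hF
  set M : ℝ := ((n - (j - 1) : ℕ) : ℝ) with hM
  set Q : ℝ := (1 - x) ^ (j * n) with hQdef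
  set P : ℝ := x ^ (j - 1) with hPdef
  have hF0 : (0 : ℝ) < F := by rw [hF]; exact_mod_cast (j - 1).factorial_pos
  have hC0 : (0 : ℝ) ≤ C := by rw [hC]; positivity
  have hQ0 : (0 : ℝ) ≤ Q := by
    rw [hQdef]; apply pow_nonneg; linarith [hx32]
  have hP0 : (0 : ℝ) ≤ P := by rw [hPdef]; positivity
  -- b4 : M^(j-1) ≤ F * C
  have b4 : M ^ (j - 1) ≤ F * C := by
    have h := Nat.pow_sub_le_descFactorial (n - 1) (j - 1)
    rw [Nat.descFactorial_eq_factorial_mul_choose] at h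
    have hrw : n - 1 + 1 = n := by omega
    rw [hrw] at h
    rw [hM, hF, hC]
    exact_mod_cast h
  -- b1 : 7/8 ≤ (M*x)^(j-1)
  have hMnj : (1 : ℝ) - (j : ℝ) * x ≤ M * x := by
    have hjn : j - 1 ≤ n := by omega
    have : M = (n : ℝ) - ((j - 1 : ℕ) : ℝ) := by
      rw [hM]; exact Nat.cast_sub hjn
    have hj1le : ((j - 1 : ℕ) : ℝ) ≤ (j : ℝ) := by exact_mod_cast Nat.sub_le j 1
    have hMge : (n : ℝ) - (j : ℝ) ≤ M := by rw [this]; linarith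
    calc (1 : ℝ) - (j : ℝ) * x = (n : ℝ) * x - (j : ℝ) * x := by rw [hnx]
      _ = ((n : ℝ) - (j : ℝ)) * x := by ring
      _ ≤ M * x := mul_le_mul_of_nonneg_right hMge hx0.le
  have hjx0 : (0 : ℝ) ≤ 1 - (j : ℝ) * x := by linarith
  have b1 : (7 / 8 : ℝ) ≤ (M * x) ^ (j - 1) := by
    have hbern := one_add_mul_le_pow (a := -((j : ℝ) * x)) (by linarith) (j - 1)
    have hj1le : ((j - 1 : ℕ) : ℝ) ≤ (j : ℝ) := by exact_mod_cast Nat.sub_le j 1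
    have h78 : (7 / 8 : ℝ) ≤ 1 + ((j - 1 : ℕ) : ℝ) * -((j : ℝ) * x) := by
      have h1 : ((j - 1 : ℕ) : ℝ) * ((j : ℝ) * x) ≤ (j : ℝ) * ((j : ℝ) * x) :=
        mul_le_mul_of_nonneg_right hj1le (by positivity)
      have h2 : (j : ℝ) * ((j : ℝ) * x) = (j : ℝ) ^ 2 * x := by ring
      rw [h2] at h1
      have := hj2x
      nlinarith
    calc (7 / 8 : ℝ) ≤ 1 + ((j - 1 : ℕ) : ℝ) * -((j : ℝ) * x) := h78
      _ ≤ (1 + -((j : ℝ) * x)) ^ (j - 1) := hbern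
      _ = (1 - (j : ℝ) * x) ^ (j - 1) := by ring_nf
      _ ≤ (M * x) ^ (j - 1) := pow_le_pow_left₀ hjx0 hMnj _
  -- b3 : (15/16) * exp(-j) ≤ Q
  have b3 : (15 / 16 : ℝ) * Real.exp (-(j : ℝ)) ≤ Q := by
    have hq1 : Real.exp (-(x + x ^ 2)) ≤ 1 - x :=
      exp_neg_le_one_sub hx0.le (by linarith)
    have hq2 : Real.exp (-(x + x ^ 2)) ^ (j * n) ≤ (1 - x) ^ (j * n) :=
      pow_le_pow_left₀ (Real.exp_pos _).le hq1 _
    have hq3 : Real.exp (-(x + x ^ 2)) ^ (j * n) =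
        Real.exp (-(j : ℝ) - (j : ℝ) * x) := by
      rw [← Real.exp_nat_mul]
      congr 1
      push_cast
      linear_combination (-(j : ℝ) - (j : ℝ) * x) * hnx
    have hq4 : (15 / 16 : ℝ) * Real.exp (-(j : ℝ)) ≤
        Real.exp (-(j : ℝ) - (j : ℝ) * x) := by
      rw [sub_eq_add_neg, Real.exp_add, mul_comm ((15 : ℝ) / 16)]
      apply mul_le_mul_of_nonneg_left _ (Real.exp_pos _).le
      have := Real.add_one_le_exp (-((j : ℝ) * x))
      linarith
    rw [hQdef]
    calc (15 / 16 : ℝ) * Real.exp (-(j : ℝ)) ≤ _ := hq4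
      _ = Real.exp (-(x + x ^ 2)) ^ (j * n) := hq3.symm
      _ ≤ (1 - x) ^ (j * n) := hq2
  -- b2 : exp(j-1) * F ≤ j^(j-1) * sqrt j
  have b2 : Real.exp ((j : ℝ) - 1) * F ≤ (j : ℝ) ^ (j - 1) * Real.sqrt j := by
    have h := stirling_bound (j - 1)
    have hcast : ((j - 1 : ℕ) : ℝ) = (j : ℝ) - 1 := by
      have h1j : (1 : ℕ) ≤ j := by omega
      rw [Nat.cast_sub h1j, Nat.cast_one]
    rw [hcast] at h
    have hjj : (j : ℝ) - 1 + 1 = (j : ℝ) := by ring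
    rw [hjj] at h
    rw [hF]
    exact h
  -- rpow identity
  have hrpow : (j : ℝ) ^ (-(3 : ℝ) / 2) = 1 / ((j : ℝ) * Real.sqrt j) := by
    have h32 : (j : ℝ) ^ ((3 : ℝ) / 2) = (j : ℝ) * Real.sqrt j := by
      rw [show (3 : ℝ) / 2 = 1 + 1 / 2 by norm_num, Real.rpow_add hjR, Real.rpow_one,
        ← Real.sqrt_eq_rpow]
    rw [show (-(3 : ℝ) / 2) = -((3 : ℝ) / 2) by ring, Real.rpow_neg hjR.le, h32,
      one_div]
  -- numeric: exp(-4) ≤ (7/8) * (15/16) * exp(-1)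
  have hnum : Real.exp (-4) ≤ (7 / 8 : ℝ) * (15 / 16) * Real.exp (-1) := by
    have h3 : (4 : ℝ) ≤ Real.exp 3 := by
      have := Real.add_one_le_exp (3 : ℝ)
      linarith
    have hinv : Real.exp (-3) ≤ 1 / 4 := by
      rw [Real.exp_neg]
      rw [inv_le_comm₀ (Real.exp_pos 3) (by norm_num)]
      linarith
    have h4 : Real.exp (-4) = Real.exp (-3) * Real.exp (-1) := by
      rw [← Real.exp_add]; norm_num
    rw [h4]
    apply mul_le_mul_of_nonneg_right _ (Real.exp_pos _).le
    linarith
  -- main goal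
  push_cast
  rw [hrpow, mul_one_div, div_le_iff₀ (by positivity : (0 : ℝ) < (j : ℝ) * Real.sqrt j)]
  have hjj1 : (j : ℝ) ^ (j - 1) = (j : ℝ) ^ (j - 2) * (j : ℝ) := by
    rw [← pow_succ]
    congr 1
    omega
  calc Real.exp (-4) ≤ (7 / 8 : ℝ) * (15 / 16) * Real.exp (-1) := hnum
    _ = (7 / 8 : ℝ) * ((15 / 16) * Real.exp (-(j : ℝ))) * Real.exp ((j : ℝ) - 1) := by
        rw [show Real.exp (-(1 : ℝ)) = Real.exp (-(j : ℝ)) * Real.exp ((j : ℝ) - 1) from by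
          rw [← Real.exp_add]; congr 1; ring]
        ring
    _ ≤ (M * x) ^ (j - 1) * ((15 / 16) * Real.exp (-(j : ℝ))) * Real.exp ((j : ℝ) - 1) := by
        apply mul_le_mul_of_nonneg_right _ (Real.exp_pos _).le
        apply mul_le_mul_of_nonneg_right b1
        positivity
    _ ≤ (M * x) ^ (j - 1) * Q * Real.exp ((j : ℝ) - 1) := by
        apply mul_le_mul_of_nonneg_right _ (Real.exp_pos _).le
        apply mul_le_mul_of_nonneg_left b3
        positivity
    _ = M ^ (j - 1) * P * (Q * Real.exp ((j : ℝ) - 1)) := by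
        rw [mul_pow, hPdef]; ring
    _ ≤ F * C * P * (Q * Real.exp ((j : ℝ) - 1)) := by
        apply mul_le_mul_of_nonneg_right _ (by positivity)
        exact mul_le_mul_of_nonneg_right b4 hP0
    _ = C * P * Q * (Real.exp ((j : ℝ) - 1) * F) := by ring
    _ ≤ C * P * Q * ((j : ℝ) ^ (j - 1) * Real.sqrt j) := by
        apply mul_le_mul_of_nonneg_left b2
        positivity
    _ = C * (j : ℝ) ^ (j - 2) * (P * Q) * ((j : ℝ) * Real.sqrt j) := by
        rw [hjj1]; ring
lemma exp_neg_four_le : Real.exp (-4 : ℝ) ≤ 1/5 := by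
  have h5 : (5:ℝ) ≤ Real.exp 4 := by
    have := Real.add_one_le_exp (4:ℝ); linarith
  rw [Real.exp_neg, inv_le_comm₀ (Real.exp_pos 4) (by norm_num)]
  norm_num
  linarith

lemma analysis_one {n : ℕ} (hn2 : 2 ≤ n) : Real.exp (-4) ≤ (1 - 1/(n:ℝ))^n := by
  rcases Nat.lt_or_ge n 4 with h | h
  · interval_cases n
    · calc Real.exp (-4:ℝ) ≤ 1/5 := exp_neg_four_le
        _ ≤ (1 - 1/((2:ℕ):ℝ))^2 := by norm_num
    · calc Real.exp (-4:ℝ) ≤ 1/5 := exp_neg_four_le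
        _ ≤ (1 - 1/((3:ℕ):ℝ))^3 := by norm_num
  · have hnR : (0:ℝ) < n := by positivity
    set x : ℝ := 1/(n:ℝ) with hxdef
    have hx0 : 0 < x := by positivity
    have hnx : (n:ℝ) * x = 1 := by rw [hxdef]; field_simp
    have hx4 : x ≤ 1/4 := by
      rw [hxdef, div_le_div_iff₀ hnR (by norm_num)]
      have : (4:ℝ) ≤ n := by exact_mod_cast h
      linarith
    have hq1 : Real.exp (-(x + x^2)) ≤ 1 - x := exp_neg_le_one_sub hx0.le hx4
    have hq2 : Real.exp (-(x + x^2))^n ≤ (1-x)^n := pow_le_pow_left₀ (Real.exp_pos _).le hq1 _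
    have hq3 : Real.exp (-(x + x^2))^n = Real.exp (-1 - x) := by
      rw [← Real.exp_nat_mul]
      congr 1
      linear_combination (-1 - x) * hnx
    have hq4 : Real.exp (-4:ℝ) ≤ Real.exp (-1 - x) := by
      apply Real.exp_le_exp.mpr
      linarith
    calc Real.exp (-4:ℝ) ≤ Real.exp (-1-x) := hq4
      _ = Real.exp (-(x + x^2))^n := hq3.symm
      _ ≤ (1-x)^n := hq2

open Real

lemma erMeasure_comp_ge_one {n : ℕ} (hn : 0 < n) :
    (1 - min (n : ℝ≥0∞)⁻¹ 1) ^ (1 * n) ≤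
      erMeasure n {ω | compSize (graphOf ω) ⟨0, hn⟩ = 1} := by
  classical
  set z0 : Fin n := ⟨0, hn⟩
  have hES : ∀ e ∈ (∅ : Finset (Sym2 (Fin n))), ∃ u v : Fin n,
      u ∈ ({z0} : Finset (Fin n)) ∧ v ∈ ({z0} : Finset (Fin n)) ∧ u ≠ v ∧ e = s(u, v) := by
    simp
  have hconn : ∀ x ∈ ({z0} : Finset (Fin n)), ∀ y ∈ ({z0} : Finset (Fin n)),
      (SimpleGraph.fromEdgeSet ((↑(∅ : Finset (Sym2 (Fin n)))) : Set (Sym2 (Fin n)))).Reachable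
        x y := by
    intro x hx y hy
    rw [Finset.mem_singleton] at hx hy
    subst hx; subst hy
    exact SimpleGraph.Reachable.refl _
  have hsub : eventA (∅ : Finset (Sym2 (Fin n))) {z0} ⊆
      {ω | compSize (graphOf ω) ⟨0, hn⟩ = 1} := by
    intro ω hω
    have := eventA_compSize hES hconn hω (Finset.mem_singleton_self z0)
    simpa using this
  have hmeas := erMeasure_eventA (S := ({z0} : Finset (Fin n)))
    (E := (∅ : Finset (Sym2 (Fin n)))) (Finset.empty_subset _)
  calc (1 - min (n : ℝ≥0∞)⁻¹ 1) ^ (1 * n)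
      ≤ (1 - min (n : ℝ≥0∞)⁻¹ 1) ^ ((cutF ({z0} : Finset (Fin n)) \ ∅).card) := by
        apply pow_le_pow_of_le_one (by positivity) tsub_le_self
        calc (cutF ({z0} : Finset (Fin n)) \ ∅).card = (cutF ({z0} : Finset (Fin n))).card := by
              rw [Finset.sdiff_empty]
          _ ≤ ({z0} : Finset (Fin n)).card * n := cutF_card_le
          _ = 1 * n := by rw [Finset.card_singleton]
    _ = erMeasure n (eventA ∅ {z0}) := by
        rw [hmeas, Finset.card_empty, pow_zero, one_mul]
    _ ≤ _ := MeasureTheory.measure_mono hsub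

end CSLB

/-- There is a constant `c > 0` such that for every `n` and every
integer `j` with `1 ≤ j ≤ n^{1/5}`, the component of the first vertex in `G(n, 1/n)`
satisfies `P( |C(1)| = j ) ≥ c j^{−3/2}`. (The constraints force `n ≥ 1`, so the
hypothesis `0 < n` making the vertex well defined is no extra restriction.) -/
theorem component_size_lower_bound :
    ∃ c > (0 : ℝ), ∀ n : ℕ, ∀ hn : 0 < n, ∀ j : ℕ, 1 ≤ j → (j : ℝ) ≤ (n : ℝ) ^ ((1 : ℝ) / 5) →
      c * (j : ℝ) ^ (-(3 : ℝ) / 2) ≤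
        (erMeasure n {ω | compSize (graphOf ω) ⟨0, hn⟩ = j}).toReal := by
  refine ⟨Real.exp (-4), Real.exp_pos _, ?_⟩
  intro n hn j hj1 hj5
  have hn0R : (0 : ℝ) ≤ (n : ℝ) := Nat.cast_nonneg n
  have hj5n : j ^ 5 ≤ n := by
    have h1 : ((j : ℝ)) ^ (5 : ℕ) ≤ ((n : ℝ) ^ ((1 : ℝ) / 5)) ^ (5 : ℕ) :=
      pow_le_pow_left₀ (Nat.cast_nonneg j) hj5 5
    have h2 : ((n : ℝ) ^ ((1 : ℝ) / 5)) ^ (5 : ℕ) = (n : ℝ) := by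
      rw [← Real.rpow_natCast ((n : ℝ) ^ ((1 : ℝ) / 5)) 5, ← Real.rpow_mul hn0R]
      norm_num
    rw [h2] at h1
    exact_mod_cast h1
  rcases Nat.lt_or_ge n 2 with hn1 | hn2
  · -- n = 1, hence j = 1
    have hne1 : n = 1 := by omega
    have hje1 : j = 1 := by
      by_contra hc
      have h2j : 2 ≤ j := by omega
      have h32 : 2 ^ 5 ≤ j ^ 5 := Nat.pow_le_pow_left h2j 5
      omega
    subst hne1
    subst hje1
    have huniv : {ω : Sym2 (Fin 1) → Bool | compSize (graphOf ω) ⟨0, hn⟩ = 1} = Set.univ := by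
      ext ω
      simp only [Set.mem_setOf_eq, Set.mem_univ, iff_true]
      have hset : {w : Fin 1 | (graphOf ω).Reachable ⟨0, hn⟩ w} = {⟨0, hn⟩} := by
        ext w
        simp only [Set.mem_setOf_eq, Set.mem_singleton_iff]
        constructor
        · intro _; exact Subsingleton.elim _ _
        · rintro rfl; exact SimpleGraph.Reachable.refl _
      rw [compSize, hset, Nat.card_coe_set_eq, Set.ncard_singleton]
    rw [huniv]
    simp only [MeasureTheory.measure_univ, ENNReal.toReal_one, Nat.cast_one, Real.one_rpow,
      mul_one]
    calc Real.exp (-4 : ℝ) ≤ Real.exp 0 := Real.exp_le_exp.mpr (by norm_num)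
      _ = 1 := Real.exp_zero
  · -- n ≥ 2
    have h1len : (1 : ℝ≥0∞) ≤ (n : ℝ≥0∞) := by exact_mod_cast (by omega : 1 ≤ n)
    have hinvle : ((n : ℝ≥0∞))⁻¹ ≤ 1 := by
      rw [ENNReal.inv_le_one]; exact h1len
    have hpmin : min (n : ℝ≥0∞)⁻¹ 1 = (n : ℝ≥0∞)⁻¹ := min_eq_left hinvle
    have hqtoReal : (1 - (n : ℝ≥0∞)⁻¹).toReal = 1 - 1 / (n : ℝ) := by
      rw [ENNReal.toReal_sub_of_le hinvle ENNReal.one_ne_top, ENNReal.toReal_one,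
        ENNReal.toReal_inv, ENNReal.toReal_natCast, one_div]
    have hmune : erMeasure n {ω | compSize (graphOf ω) ⟨0, hn⟩ = j} ≠ ⊤ :=
      MeasureTheory.measure_ne_top _ _
    rcases eq_or_lt_of_le hj1 with hj1' | hj2
    · -- j = 1
      have hje1 : j = 1 := hj1'.symm
      subst hje1
      have hb := CSLB.erMeasure_comp_ge_one hn
      have htr : ((1 - min (n : ℝ≥0∞)⁻¹ 1) ^ (1 * n)).toReal = (1 - 1 / (n : ℝ)) ^ n := by
        rw [hpmin, ENNReal.toReal_pow, hqtoReal, one_mul]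
      calc Real.exp (-4) * ((1 : ℕ) : ℝ) ^ (-(3 : ℝ) / 2)
          = Real.exp (-4) := by rw [Nat.cast_one, Real.one_rpow, mul_one]
        _ ≤ (1 - 1 / (n : ℝ)) ^ n := CSLB.analysis_one hn2
        _ = ((1 - min (n : ℝ≥0∞)⁻¹ 1) ^ (1 * n)).toReal := htr.symm
        _ ≤ _ := ENNReal.toReal_mono hmune hb
    · -- j ≥ 2
      have hj2' : 2 ≤ j := hj2
      have hb := CSLB.erMeasure_comp_ge hn hj2'
      have htr : (((((n - 1).choose (j - 1) * j ^ (j - 2) : ℕ)) : ℝ≥0∞) *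
          ((min (n : ℝ≥0∞)⁻¹ 1) ^ (j - 1) * (1 - min (n : ℝ≥0∞)⁻¹ 1) ^ (j * n))).toReal =
          (((n - 1).choose (j - 1) * j ^ (j - 2) : ℕ) : ℝ) *
            ((1 / (n : ℝ)) ^ (j - 1) * (1 - 1 / (n : ℝ)) ^ (j * n)) := by
        rw [hpmin, ENNReal.toReal_mul, ENNReal.toReal_mul, ENNReal.toReal_pow,
          ENNReal.toReal_pow, hqtoReal, ENNReal.toReal_inv, ENNReal.toReal_natCast,
          ENNReal.toReal_natCast, one_div]
      calc Real.exp (-4) * (j : ℝ) ^ (-(3 : ℝ) / 2)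
          ≤ (((n - 1).choose (j - 1) * j ^ (j - 2) : ℕ) : ℝ) *
            ((1 / (n : ℝ)) ^ (j - 1) * (1 - 1 / (n : ℝ)) ^ (j * n)) :=
          CSLB.analysis_main hj2' hj5n
        _ = _ := htr.symm
        _ ≤ _ := ENNReal.toReal_mono hmune hb
end

section
/- Let γ ∈ ℝ and let w be any assignment of weights to the edges of K_n taking values in {1, n^{1+γ}}. For a vertex u, let C(u) be the set of vertices reachable from u using only edges e with w(e) = n^{1+γ}. Let T be sampled from the weighted uniform spanning tree measure P^w, and for vertices u, v let π_T(u,v) be the path in T connecting u and v. Then P^w( there exist vertices u, v of K_n and an edge e with v ∈ C(u), e ∈ π_T(u,v), and w(e) = 1 ) ≤ n^{4−γ}. -/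
set_option maxHeartbeats 1000000


open MeasureTheory Filter
open scoped ENNReal

/-- The graph of heavy edges: `u ∼ v` iff the edge `{u,v}` has weight `n^(1+γ)`.
Its components are the sets `C(u)` of vertices reachable by heavy edges. -/
def heavyGraph (n : ℕ) (γ : ℝ) (w : Sym2 (Fin n) → ℝ) : SimpleGraph (Fin n) where
  Adj u v := u ≠ v ∧ w s(u, v) = (n : ℝ) ^ ((1 : ℝ) + γ)
  symm := by
    constructor
    intro u v h
    exact ⟨Ne.symm h.1, by rw [Sym2.eq_swap]; exact h.2⟩
  loopless := by
    constructor
    intro u h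
    exact h.1 rfl


section AuxLemmas

open SimpleGraph

variable {V : Type*}

private lemma reachable_of_forall_adj' {H D : SimpleGraph V}
    (h : ∀ a b : V, H.Adj a b → D.Reachable a b) {u v : V} (huv : H.Reachable u v) :
    D.Reachable u v := by
  obtain ⟨p⟩ := huv
  induction p with
  | nil => exact Reachable.refl _
  | cons ha q ih => exact (h _ _ ha).trans ih

private lemma side_of_deleteEdge_aux {T : SimpleGraph V} {c d : V}
    {x y : V} (p : T.Walk x y) :
    (T.deleteEdges {s(c, d)}).Reachable x y ∨
      (T.deleteEdges {s(c, d)}).Reachable x c ∨ (T.deleteEdges {s(c, d)}).Reachable x d := by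
  induction p with
  | nil => exact Or.inl (Reachable.refl _)
  | @cons x z _ hxz q ih =>
    by_cases he : s(x, z) = s(c, d)
    · rw [Sym2.eq_iff] at he
      rcases he with ⟨rfl, rfl⟩ | ⟨rfl, rfl⟩
      · exact Or.inr (Or.inl (Reachable.refl _))
      · exact Or.inr (Or.inr (Reachable.refl _))
    · have hadj : (T.deleteEdges {s(c, d)}).Adj x z := by
        rw [deleteEdges_adj]
        exact ⟨hxz, by simpa using he⟩
      rcases ih with h | h | h
      · exact Or.inl (hadj.reachable.trans h)
      · exact Or.inr (Or.inl (hadj.reachable.trans h))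
      · exact Or.inr (Or.inr (hadj.reachable.trans h))

private lemma side_of_deleteEdge {T : SimpleGraph V} (hT : T.Connected) (c d : V)
    (x : V) :
    (T.deleteEdges {s(c, d)}).Reachable x c ∨ (T.deleteEdges {s(c, d)}).Reachable x d := by
  obtain ⟨p⟩ := hT.preconnected x c
  rcases side_of_deleteEdge_aux (c := c) (d := d) p with h | h | h
  · exact Or.inl h
  · exact Or.inl h
  · exact Or.inr h

private lemma isTree_swap {T : SimpleGraph V} (hT : T.IsTree) {c d a b : V}
    (hcd : T.Adj c d) (hab : a ≠ b)
    (hnr : ¬ (T.deleteEdges {s(c, d)}).Reachable a b) :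
    ((T.deleteEdges {s(c, d)}) ⊔ fromEdgeSet {s(a, b)}).IsTree := by
  set D := T.deleteEdges {s(c, d)} with hD
  set T' := D ⊔ fromEdgeSet {s(a, b)} with hT'
  have hDT' : D ≤ T' := le_sup_left
  have hT'ab : T'.Adj a b := by
    refine Or.inr ?_
    rw [fromEdgeSet_adj]
    exact ⟨rfl, hab⟩
  have hside := side_of_deleteEdge hT.isConnected c d
  have hcdT' : T'.Reachable c d := by
    rcases hside a with ha | ha <;> rcases hside b with hb | hb
    · exact absurd (ha.trans hb.symm) hnr
    · exact ((ha.mono hDT').symm.trans hT'ab.reachable).trans (hb.mono hDT')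
    · exact ((hb.mono hDT').symm.trans hT'ab.symm.reachable).trans (ha.mono hDT')
    · exact absurd (ha.trans hb.symm) hnr
  have key : ∀ x, T'.Reachable x c := by
    intro x
    rcases hside x with h | h
    · exact h.mono hDT'
    · exact (h.mono hDT').trans hcdT'.symm
  have hconn : T'.Connected := by
    haveI : Nonempty V := ⟨c⟩
    exact ⟨fun x y => (key x).trans (key y).symm⟩
  have hsdiff : T' \ fromEdgeSet {s(a, b)} ≤ D := by
    intro x y hxy
    rw [sdiff_adj] at hxy
    rcases hxy.1 with h | h
    · exact h
    · exact absurd h hxy.2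
  have hbridge : T'.IsBridge s(a, b) := by
    rw [isBridge_iff]
    exact fun hr => hnr (hr.mono hsdiff)
  refine ⟨hconn, ?_⟩
  intro v p hp
  have hfp : s(a, b) ∉ p.edges :=
    hbridge.notMem_edges_of_isCycle hp
  have hedges : ∀ e ∈ p.edges, e ∈ T.edgeSet := by
    intro e he
    have hmem := p.edges_subset_edgeSet he
    rw [hT', edgeSet_sup, hD, edgeSet_deleteEdges, edgeSet_fromEdgeSet] at hmem
    rcases hmem with h | h
    · exact h.1
    · exact absurd (h.1 ▸ he) hfp
  exact hT.IsAcyclic (p.transfer T hedges) (hp.transfer hedges)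

end AuxLemmas

private lemma treeWeight_def {n : ℕ} (w : Sym2 (Fin n) → ℝ) (T : SimpleGraph (Fin n))
    [Fintype T.edgeSet] :
    treeWeight w T = ∏ e ∈ T.edgeSet.toFinset, w e := by
  unfold treeWeight
  refine Finset.prod_congr ?_ fun _ _ => rfl
  ext e
  simp [Set.mem_toFinset]

private lemma treeWeight_nonneg {n : ℕ} {w : Sym2 (Fin n) → ℝ} (hw : ∀ e, 0 ≤ w e)
    (T : SimpleGraph (Fin n)) : 0 ≤ treeWeight w T :=
  Finset.prod_nonneg fun e _ => hw e

private lemma ustProb_le {n : ℕ} (w : Sym2 (Fin n) → ℝ) (E : Set (SimpleGraph (Fin n)))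
    (C : ℝ) (hC : 0 ≤ C) (hwnn : ∀ e, 0 ≤ w e)
    [instE : DecidablePred (fun T : SimpleGraph (Fin n) => T.IsTree ∧ T ∈ E)]
    [instT : DecidablePred (fun T : SimpleGraph (Fin n) => T.IsTree)]
    (h : ∑ T ∈ Finset.univ.filter (fun T : SimpleGraph (Fin n) => T.IsTree ∧ T ∈ E),
          treeWeight w T
        ≤ C * ∑ T ∈ Finset.univ.filter (fun T : SimpleGraph (Fin n) => T.IsTree),
          treeWeight w T) :
    ustProb w E ≤ C := by
  unfold ustProb
  have hi : ∀ (p : SimpleGraph (Fin n) → Prop) (i1 i2 : DecidablePred p),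
      @Finset.filter _ p i1 Finset.univ = @Finset.filter _ p i2 Finset.univ := by
    intro p i1 i2
    have : i1 = i2 := funext fun a => Subsingleton.elim _ _
    rw [this]
  rw [hi _ _ instE, hi _ _ instT]
  set den := ∑ T ∈ Finset.univ.filter (fun T : SimpleGraph (Fin n) => T.IsTree),
    treeWeight w T with hden
  have hden0 : 0 ≤ den := Finset.sum_nonneg fun T _ => treeWeight_nonneg hwnn T
  rcases hden0.eq_or_lt with h0 | h0
  · rw [← h0, div_zero]
    exact hC
  · rw [div_le_iff₀ h0]
    calc _ ≤ C * den := h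
    _ = C * den := rfl

/-- Let `γ ∈ ℝ` and let `w` be any assignment of weights in
`{1, n^{1+γ}}` to the edges of `K_n`. If `T` is sampled from the weighted uniform
spanning tree measure `P^w`, then the probability that there are vertices `u, v` with
`v ∈ C(u)` and an edge `e` of weight `1` on the tree path `π_T(u,v)` is at most
`n^{4−γ}`.  (For a tree `T`, an edge `e ∈ T` lies on the path between `u` and `v`
if and only if deleting `e` disconnects `u` from `v` in `T`.) -/
theorem path_inside_component (n : ℕ) (γ : ℝ) (w : Sym2 (Fin n) → ℝ)
    (hw : ∀ e, w e = 1 ∨ w e = (n : ℝ) ^ ((1 : ℝ) + γ)) :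
    ustProb w {T : SimpleGraph (Fin n) | ∃ u v : Fin n, ∃ e ∈ T.edgeSet,
        (heavyGraph n γ w).Reachable u v ∧
        ¬ (T.deleteEdges {e}).Reachable u v ∧ w e = 1} ≤ (n : ℝ) ^ ((4 : ℝ) - γ) := by
  classical
  have hwnn : ∀ e, 0 ≤ w e := by
    intro e
    rcases hw e with h | h <;> rw [h]
    · exact zero_le_one
    · exact Real.rpow_nonneg (Nat.cast_nonneg n) _
  have hrhs : 0 ≤ (n : ℝ) ^ ((4 : ℝ) - γ) := Real.rpow_nonneg (Nat.cast_nonneg n) _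
  refine ustProb_le w _ _ hrhs hwnn ?_
  set Ev : Set (SimpleGraph (Fin n)) := {T : SimpleGraph (Fin n) | ∃ u v : Fin n, ∃ e ∈ T.edgeSet,
      (heavyGraph n γ w).Reachable u v ∧
      ¬ (T.deleteEdges {e}).Reachable u v ∧ w e = 1} with hEv
  set Bad := Finset.univ.filter (fun T : SimpleGraph (Fin n) => T.IsTree ∧ T ∈ Ev) with hBadDef
  set Tr := Finset.univ.filter (fun T : SimpleGraph (Fin n) => T.IsTree) with hTrDef
  have hTrnn : 0 ≤ ∑ T ∈ Tr, treeWeight w T :=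
    Finset.sum_nonneg fun T _ => treeWeight_nonneg hwnn T
  rcases eq_or_ne Bad ∅ with hB | hB
  · rw [hB, Finset.sum_empty]
    exact mul_nonneg hrhs hTrnn
  -- from a bad tree, extract n ≥ 2
  obtain ⟨T0, hT0⟩ := Finset.nonempty_iff_ne_empty.mpr hB
  have hn2 : 2 ≤ n := by
    have hT0' := (Finset.mem_filter.mp hT0).2
    obtain ⟨u0, v0, e0, he0, -⟩ := hT0'.2
    have hnd : ¬ e0.IsDiag := T0.not_isDiag_of_mem_edgeSet he0
    have hex : ∃ x y : Fin n, x ≠ y := by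
      revert hnd
      induction e0 using Sym2.ind with
      | _ x y => exact fun hnd => ⟨x, y, fun h => hnd (by simp [h])⟩
    obtain ⟨x, y, hxy⟩ := hex
    haveI : Nontrivial (Fin n) := ⟨⟨x, y, hxy⟩⟩
    have := Fintype.one_lt_card (α := Fin n)
    simp at this; omega
  have hnR : (1 : ℝ) ≤ (n : ℝ) := by exact_mod_cast Nat.one_le_of_lt hn2
  have hn0 : (0 : ℝ) < (n : ℝ) := lt_of_lt_of_le zero_lt_one hnR
  set heavy := (n : ℝ) ^ ((1 : ℝ) + γ) with hheavy
  have hheavy0 : 0 < heavy := Real.rpow_pos_of_pos hn0 _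
  have hBadTr : Bad ⊆ Tr := by
    intro T hT
    rw [hTrDef, Finset.mem_filter]
    exact ⟨Finset.mem_univ _, ((Finset.mem_filter.mp hT).2).1⟩
  by_cases hne : heavy = 1
  · -- degenerate case: all weights are 1; then 1 + γ = 0, so the bound is at least 1
    have hlog : ((1 : ℝ) + γ) * Real.log n = 0 := by
      have := Real.log_rpow hn0 ((1 : ℝ) + γ)
      rw [← hheavy, hne, Real.log_one] at this
      linarith [this]
    have hγ : (1 : ℝ) + γ = 0 := by
      rcases mul_eq_zero.mp hlog with h | h
      · exact h
      · exact absurd h (Real.log_pos (by exact_mod_cast Nat.one_lt_cast.mpr hn2)).ne'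
    have h4 : (1 : ℝ) ≤ (n : ℝ) ^ ((4 : ℝ) - γ) := Real.one_le_rpow hnR (by linarith)
    calc ∑ T ∈ Bad, treeWeight w T ≤ ∑ T ∈ Tr, treeWeight w T :=
          Finset.sum_le_sum_of_subset_of_nonneg hBadTr
            (fun T _ _ => treeWeight_nonneg hwnn T)
      _ = 1 * ∑ T ∈ Tr, treeWeight w T := (one_mul _).symm
      _ ≤ (n : ℝ) ^ ((4 : ℝ) - γ) * ∑ T ∈ Tr, treeWeight w T :=
          mul_le_mul_of_nonneg_right h4 hTrnn
  -- main case
  have hP : ∀ T ∈ Bad, ∃ e f : Sym2 (Fin n),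
      e ∈ T.edgeSet ∧ w e = 1 ∧ f ∉ T.edgeSet ∧ w f = heavy ∧ ¬ f.IsDiag ∧
      ((T.deleteEdges {e}) ⊔ SimpleGraph.fromEdgeSet {f}).IsTree := by
    intro T hT
    obtain ⟨-, hTree, hTE⟩ :
        T ∈ Finset.univ ∧ T.IsTree ∧ T ∈ Ev := by
      have := Finset.mem_filter.mp hT
      exact ⟨this.1, this.2.1, this.2.2⟩
    obtain ⟨u, v, e, heT, hreach, hnr, hweq⟩ := hTE
    have hcross : ∃ a b : Fin n, (heavyGraph n γ w).Adj a b ∧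
        ¬ (T.deleteEdges {e}).Reachable a b := by
      by_contra hcon
      push_neg at hcon
      exact hnr (reachable_of_forall_adj' (fun a b hab => hcon a b hab) hreach)
    obtain ⟨a, b, hab, hnab⟩ := hcross
    obtain ⟨habne, hwf⟩ := hab
    revert heT hnr hweq hnab
    induction e using Sym2.ind with
    | _ c d =>
      intro heT hnr hweq hnab
      have hcdadj : T.Adj c d := (SimpleGraph.mem_edgeSet T).mp heT
      have hfT : s(a, b) ∉ T.edgeSet := by
        intro hmem
        refine hnab (SimpleGraph.Adj.reachable ?_)
        rw [SimpleGraph.deleteEdges_adj]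
        refine ⟨(SimpleGraph.mem_edgeSet T).mp hmem, ?_⟩
        simp only [Set.mem_singleton_iff]
        intro h
        exact hne (by rw [hheavy, ← hwf, h, hweq])
      exact ⟨s(c, d), s(a, b), heT, hweq, hfT, hwf, by simp [habne],
        isTree_swap hTree hcdadj habne hnab⟩
  haveI : Nonempty (Fin n) := ⟨⟨0, by omega⟩⟩
  haveI : Nonempty (Sym2 (Fin n)) := Nonempty.map (fun x => s(x, x)) ‹Nonempty (Fin n)›
  choose! pe pf hpe hwe1 hpf hwfh hpfd hPtree using hP
  set Φ : SimpleGraph (Fin n) → SimpleGraph (Fin n) :=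
    fun T => (T.deleteEdges {pe T}) ⊔ SimpleGraph.fromEdgeSet {pf T} with hΦ
  have hEdge : ∀ T ∈ Bad, (Φ T).edgeSet = insert (pf T) (T.edgeSet \ {pe T}) := by
    intro T hT
    rw [hΦ]
    simp only [SimpleGraph.edgeSet_sup, SimpleGraph.edgeSet_deleteEdges,
      SimpleGraph.edgeSet_fromEdgeSet]
    have hsingle : ({pf T} : Set (Sym2 (Fin n))) \ Sym2.diagSet = {pf T} := by
      ext x
      simp only [Set.mem_diff, Set.mem_singleton_iff, Sym2.mem_diagSet, and_iff_left_iff_imp]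
      rintro rfl
      exact hpfd T hT
    rw [hsingle, Set.union_comm, Set.singleton_union]
  have hwt : ∀ T ∈ Bad, treeWeight w (Φ T) = heavy * treeWeight w T := by
    intro T hT
    rw [treeWeight_def, treeWeight_def]
    have h1 : (Φ T).edgeSet.toFinset = insert (pf T) (T.edgeSet.toFinset.erase (pe T)) := by
      ext x
      simp only [Set.mem_toFinset, hEdge T hT, Set.mem_insert_iff, Set.mem_diff,
        Set.mem_singleton_iff, Finset.mem_insert, Finset.mem_erase]
      tauto
    have hnotmem : pf T ∉ T.edgeSet.toFinset.erase (pe T) := by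
      intro h
      exact hpf T hT (Set.mem_toFinset.mp (Finset.mem_of_mem_erase h))
    rw [h1, Finset.prod_insert hnotmem, hwfh T hT]
    congr 1
    exact Finset.prod_erase _ (hwe1 T hT)
  have hrec : ∀ T ∈ Bad, ((Φ T).deleteEdges {pf T}) ⊔ SimpleGraph.fromEdgeSet {pe T} = T := by
    intro T hT
    rw [← SimpleGraph.edgeSet_inj]
    rw [SimpleGraph.edgeSet_sup, SimpleGraph.edgeSet_deleteEdges,
      SimpleGraph.edgeSet_fromEdgeSet, hEdge T hT]
    ext x
    simp only [Set.mem_union, Set.mem_diff, Set.mem_insert_iff, Set.mem_singleton_iff,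
      Set.mem_setOf_eq]
    constructor
    · rintro (⟨rfl | ⟨hx, -⟩, hne'⟩ | ⟨rfl, -⟩)
      · exact absurd rfl hne'
      · exact hx
      · exact hpe T hT
    · intro hx
      by_cases hxe : x = pe T
      · exact Or.inr ⟨hxe, T.not_isDiag_of_mem_edgeSet hx⟩
      · have hxf : x ≠ pf T := fun h => hpf T hT (h ▸ hx)
        exact Or.inl ⟨Or.inr ⟨hx, hxe⟩, hxf⟩
  have hΦTr : ∀ T ∈ Bad, Φ T ∈ Tr := by
    intro T hT
    rw [hTrDef, Finset.mem_filter]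
    exact ⟨Finset.mem_univ _, hPtree T hT⟩
  have hchoose : (n + 1).choose 2 ≤ n ^ 2 := by
    rw [Nat.choose_two_right]
    have h1 : (n + 1) * (n + 1 - 1) ≤ n ^ 2 * 2 := by
      simp only [Nat.add_sub_cancel]
      nlinarith [hn2]
    calc (n + 1) * (n + 1 - 1) / 2 ≤ n ^ 2 * 2 / 2 := Nat.div_le_div_right h1
      _ = n ^ 2 := Nat.mul_div_cancel _ (by norm_num)
  have hcard : ∀ T' ∈ Tr, (Bad.filter (fun T => Φ T = T')).card ≤ n ^ 4 := by
    intro T' _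
    have hinj : Set.InjOn (fun T => (pe T, pf T))
        ((Bad.filter (fun T => Φ T = T')) : Finset (SimpleGraph (Fin n))) := by
      intro T1 h1 T2 h2 hpq
      simp only [Finset.coe_filter, Set.mem_setOf_eq] at h1 h2
      have hB1 := h1.1
      have hB2 := h2.1
      simp only [Prod.mk.injEq] at hpq
      calc T1 = ((Φ T1).deleteEdges {pf T1}) ⊔ SimpleGraph.fromEdgeSet {pe T1} :=
            (hrec T1 hB1).symm
        _ = ((Φ T2).deleteEdges {pf T2}) ⊔ SimpleGraph.fromEdgeSet {pe T2} := by
            rw [h1.2, h2.2, hpq.1, hpq.2]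
        _ = T2 := hrec T2 hB2
    have hle := Finset.card_le_card_of_injOn (fun T => (pe T, pf T))
      (fun T _ => Finset.mem_univ _) hinj
    calc (Bad.filter (fun T => Φ T = T')).card
        ≤ (Finset.univ : Finset (Sym2 (Fin n) × Sym2 (Fin n))).card := hle
      _ = Fintype.card (Sym2 (Fin n)) * Fintype.card (Sym2 (Fin n)) := by
          rw [Finset.card_univ, Fintype.card_prod]
      _ = (n + 1).choose 2 * (n + 1).choose 2 := by rw [Sym2.card, Fintype.card_fin]
      _ ≤ n ^ 2 * n ^ 2 := Nat.mul_le_mul hchoose hchoose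
      _ = n ^ 4 := by ring
  have hsplit : ∑ T ∈ Bad, treeWeight w (Φ T)
      = ∑ T' ∈ Tr, ∑ T ∈ Bad.filter (fun T => Φ T = T'), treeWeight w (Φ T) :=
    (Finset.sum_fiberwise_of_maps_to hΦTr _).symm
  have hbound : ∑ T ∈ Bad, treeWeight w (Φ T)
      ≤ ((n : ℝ) ^ (4 : ℕ)) * ∑ T' ∈ Tr, treeWeight w T' := by
    rw [hsplit, Finset.mul_sum]
    refine Finset.sum_le_sum ?_
    intro T' hT'
    have hconst : ∑ T ∈ Bad.filter (fun T => Φ T = T'), treeWeight w (Φ T)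
        = (Bad.filter (fun T => Φ T = T')).card • treeWeight w T' := by
      rw [← Finset.sum_const]
      refine Finset.sum_congr rfl ?_
      intro T hT
      rw [(Finset.mem_filter.mp hT).2]
    rw [hconst, nsmul_eq_mul]
    refine mul_le_mul_of_nonneg_right ?_ (treeWeight_nonneg hwnn T')
    have := hcard T' hT'
    calc ((Bad.filter (fun T => Φ T = T')).card : ℝ) ≤ ((n ^ 4 : ℕ) : ℝ) := by
          exact_mod_cast this
      _ = (n : ℝ) ^ (4 : ℕ) := by push_cast; ring
  have hnum : ∑ T ∈ Bad, treeWeight w T = heavy⁻¹ * ∑ T ∈ Bad, treeWeight w (Φ T) := by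
    rw [Finset.mul_sum]
    refine Finset.sum_congr rfl ?_
    intro T hT
    rw [hwt T hT, ← mul_assoc, inv_mul_cancel₀ hheavy0.ne', one_mul]
  have hexp : heavy⁻¹ * (n : ℝ) ^ (4 : ℕ) = (n : ℝ) ^ ((3 : ℝ) - γ) := by
    rw [hheavy, ← Real.rpow_natCast (n : ℝ) 4, ← Real.rpow_neg hn0.le,
      ← Real.rpow_add hn0]
    congr 1
    push_cast
    ring
  calc ∑ T ∈ Bad, treeWeight w T
      = heavy⁻¹ * ∑ T ∈ Bad, treeWeight w (Φ T) := hnum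
    _ ≤ heavy⁻¹ * (((n : ℝ) ^ (4 : ℕ)) * ∑ T' ∈ Tr, treeWeight w T') :=
        mul_le_mul_of_nonneg_left hbound (inv_nonneg.mpr hheavy0.le)
    _ = (n : ℝ) ^ ((3 : ℝ) - γ) * ∑ T' ∈ Tr, treeWeight w T' := by
        rw [← mul_assoc, hexp]
    _ ≤ (n : ℝ) ^ ((4 : ℝ) - γ) * ∑ T' ∈ Tr, treeWeight w T' :=
        mul_le_mul_of_nonneg_right
          (Real.rpow_le_rpow_of_exponent_le hnR (by linarith)) hTrnn
end
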